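/- Let f : ℝ^d → ℝ be measurable. For all probabilities 0 ≤ p_H ≤ p_T ≤ 1 and every x ∈ ℝ^d, it holds (in [0,∞] with the stated conventions) that p_H^{1/d}·ξ_{p_T}^f(x) ≤ p_T^{1/d}·η_{p_H}^f(x). -/

import Mathlib

open MeasureTheory Set Filter

/-- Isotropic Gaussian measure `N(m, σ²I)` on `ℝ^d`, defined by its density
`x ↦ (2π)^{-d/2} σ^{-d} exp(−‖x−m‖²/(2σ²))` w.r.t. Lebesgue measure. -/
noncomputable def gaussES (d : ℕ) (m : EuclideanSpace ℝ (Fin d)) (σ : ℝ) :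
    Measure (EuclideanSpace ℝ (Fin d)) :=
  volume.withDensity fun x =>
    ENNReal.ofReal ((2 * Real.pi) ^ (-(d : ℝ) / 2) * (σ ^ d)⁻¹ *
      Real.exp (-‖x - m‖ ^ 2 / (2 * σ ^ 2)))

/-- Success probability of strict improvement: `p_f^<(m,σ)`. -/
noncomputable def pLt (d : ℕ) (f : EuclideanSpace ℝ (Fin d) → ℝ)
    (m : EuclideanSpace ℝ (Fin d)) (σ : ℝ) : ENNReal :=
  gaussES d m σ {x | f x < f m}

/-- Success probability of weak improvement: `p_f^≤(m,σ)`. -/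
noncomputable def pLe (d : ℕ) (f : EuclideanSpace ℝ (Fin d) → ℝ)
    (m : EuclideanSpace ℝ (Fin d)) (σ : ℝ) : ENNReal :=
  gaussES d m σ {x | f x ≤ f m}

/-- Lower step-size threshold `ξ_p^f(m) = inf {σ > 0 | p_f^<(m,σ) ≤ p}`, with `inf ∅ = ∞`. -/
noncomputable def xiES (d : ℕ) (f : EuclideanSpace ℝ (Fin d) → ℝ) (p : ℝ)
    (m : EuclideanSpace ℝ (Fin d)) : ENNReal :=
  sInf {s : ENNReal | ∃ σ : ℝ, 0 < σ ∧ s = ENNReal.ofReal σ ∧ pLt d f m σ ≤ ENNReal.ofReal p}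

/-- Upper step-size threshold `η_p^f(m) = sup {σ > 0 | p_f^≤(m,σ) ≥ p}`, with `sup ∅ = 0`. -/
noncomputable def etaES (d : ℕ) (f : EuclideanSpace ℝ (Fin d) → ℝ) (p : ℝ)
    (m : EuclideanSpace ℝ (Fin d)) : ENNReal :=
  sSup {s : ENNReal | ∃ σ : ℝ, 0 < σ ∧ s = ENNReal.ofReal σ ∧ ENNReal.ofReal p ≤ pLe d f m σ}

/-- Gap between the lower and upper step-size thresholds:
for `0 ≤ p_H ≤ p_T ≤ 1` it holds `p_H^{1/d}·ξ_{p_T}^f(x) ≤ p_T^{1/d}·η_{p_H}^f(x)`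
in `[0,∞]` (with `inf ∅ = ∞` and `sup ∅ = 0`). -/
theorem step_size_gap
    (d : ℕ) (hd : 1 ≤ d)
    (f : EuclideanSpace ℝ (Fin d) → ℝ) (hf : Measurable f)
    (pH pT : ℝ) (h0 : 0 ≤ pH) (hHT : pH ≤ pT) (h1 : pT ≤ 1)
    (x : EuclideanSpace ℝ (Fin d)) :
    ENNReal.ofReal (pH ^ (1 / (d : ℝ))) * xiES d f pT x ≤
      ENNReal.ofReal (pT ^ (1 / (d : ℝ))) * etaES d f pH x := by

  have hdpos : (0:ℝ) < 1 / (d:ℝ) := by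
    apply div_pos one_pos
    exact_mod_cast Nat.lt_of_lt_of_le Nat.zero_lt_one hd
  rcases eq_or_lt_of_le h0 with hH0 | hHpos
  · -- pH = 0 : LHS = 0
    rw [← hH0, Real.zero_rpow (ne_of_gt hdpos), ENNReal.ofReal_zero, zero_mul]
    exact zero_le
  have hTpos : 0 < pT := lt_of_lt_of_le hHpos hHT
  rcases eq_top_or_lt_top (etaES d f pH x) with htop | hfin
  · -- η = ∞ : RHS = ∞
    rw [htop, ENNReal.mul_top]
    · exact le_top
    · simp only [ne_eq, ENNReal.ofReal_eq_zero, not_le]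
      exact Real.rpow_pos_of_pos hTpos _
  -- main case: show ξ ≤ η
  have hxiEta : xiES d f pT x ≤ etaES d f pH x := by
    refine le_of_forall_gt_imp_ge_of_dense (fun c hc => ?_)
    obtain ⟨b, hb1, hb2⟩ := exists_between hc
    have hbtop : b ≠ ⊤ := (lt_of_lt_of_le hb2 le_top).ne
    set σ : ℝ := b.toReal with hσ
    have hb0 : 0 < b := lt_of_le_of_lt zero_le hb1
    have hσpos : 0 < σ := ENNReal.toReal_pos (ne_of_gt hb0) hbtop
    have hbσ : b = ENNReal.ofReal σ := (ENNReal.ofReal_toReal hbtop).symm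
    -- σ is not in the η-set, so pLe < ofReal pH
    have hnot : ¬ (ENNReal.ofReal pH ≤ pLe d f x σ) := by
      intro hmem
      have : b ≤ etaES d f pH x := le_sSup ⟨σ, hσpos, hbσ, hmem⟩
      exact absurd hb1 (not_lt.mpr this)
    have hlt : pLe d f x σ < ENNReal.ofReal pH := lt_of_not_ge hnot
    have hLtLe : pLt d f x σ ≤ pLe d f x σ := by
      unfold pLt pLe
      exact measure_mono (fun y (hy : f y < f x) => le_of_lt hy)
    have hmemXi : pLt d f x σ ≤ ENNReal.ofReal pT :=
      le_trans (le_trans hLtLe (le_of_lt hlt)) (ENNReal.ofReal_le_ofReal hHT)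
    have hxi : xiES d f pT x ≤ ENNReal.ofReal σ := sInf_le ⟨σ, hσpos, rfl, hmemXi⟩
    exact le_trans (le_trans hxi hbσ.ge) hb2.le
  exact mul_le_mul' (ENNReal.ofReal_le_ofReal
    (Real.rpow_le_rpow h0 hHT (le_of_lt hdpos))) hxiEta
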